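/- Let M be a topological space, f : M → M continuous, and k ≥ 1. Let hoP_k(f) be the subspace of (C([0,1], M))^k consisting of tuples λ = (λ_0, …, λ_{k−1}) with f(λ_{i+1}(0)) = λ_i(1) for all i (indices mod k). Two points λ and γ of hoP_k(f) lie in the same path component of hoP_k(f) if and only if there exist paths α_i in M from λ_i(0) to γ_i(0), for i = 0, …, k−1, such that for every i the concatenation λ_i · (f ∘ α_{i+1}) is path-homotopic rel endpoints to the concatenation α_i · γ_i (both are paths from λ_i(0) to γ_i(1); indices mod k). -/

import Mathlib

open unitInterval

/-- The homotopy `k`-periodic point space of `f : M → M`: the subspace of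
`(C(I, M))^k` of tuples `λ` with `f (λ_{i+1}(0)) = λ_i(1)` (indices mod `k`). -/
def hoP {M : Type*} [TopologicalSpace M] (f : M → M) (k : ℕ) [NeZero k] :
    Set (Fin k → C(I, M)) :=
  {lam | ∀ i : Fin k, f ((lam (i + 1)) 0) = (lam i) 1}

/-- A continuous map `I → M`, regarded as a path from its value at `0` to its
value at `1`. -/
def toPath {M : Type*} [TopologicalSpace M] (g : C(I, M)) : Path (g 0) (g 1) :=
  ⟨g, rfl, rfl⟩

instance : ContractibleSpace I := (convex_Icc (0:ℝ) 1).contractibleSpace ⟨0, by norm_num⟩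

instance : ContractibleSpace (I × I) :=
  (ContinuousMap.HomotopyEquiv.prodCongr
    (ContractibleSpace.hequiv_unit I).some (ContractibleSpace.hequiv_unit I).some).contractibleSpace

lemma homotopic_of_eqOn {M : Type*} [TopologicalSpace M] {a b c d : M}
    (p q : Path a b) (p' q' : Path c d)
    (hp : ∀ t, p t = p' t) (hq : ∀ t, q t = q' t) (h : p'.Homotopic q') : p.Homotopic q := by
  have hc : a = c := by rw [← p.source, hp 0, p'.source]
  have hd : b = d := by rw [← p.target, hp 1, p'.target]
  subst hc; subst hd
  rw [Path.ext (funext hp), Path.ext (funext hq)]; exact h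

/-- the identity path on I -/
def idP : Path (0:I) 1 := ⟨ContinuousMap.id I, rfl, rfl⟩

lemma joined_of_htpy {M : Type*} [TopologicalSpace M] {f : M → M} {k : ℕ} [NeZero k]
    (x z : hoP f k) (h0 : ∀ i, x.1 i 0 = z.1 i 0) (h1 : ∀ i, x.1 i 1 = z.1 i 1)
    (h : ∀ i, Path.Homotopic (toPath (x.1 i)) ((toPath (z.1 i)).cast (h0 i) (h1 i))) :
    Joined x z := by
  have F : ∀ i, (toPath (x.1 i)).Homotopy ((toPath (z.1 i)).cast (h0 i) (h1 i)) :=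
    fun i => (h i).some
  refine ⟨⟨⟨fun s => ⟨fun i => (F i).toHomotopy.toContinuousMap.curry s, ?_⟩, ?_⟩, ?_, ?_⟩⟩
  · intro i
    show f ((F (i+1)) (s, 0)) = (F i) (s, 1)
    rw [(F (i+1)).source, (F i).target]
    exact x.2 i
  · exact (Continuous.subtype_mk (continuous_pi fun i =>
      ((F i).toHomotopy.toContinuousMap.curry).continuous) _)
  · ext i t
    exact (F i).toHomotopy.apply_zero t
  · ext i t
    exact (F i).toHomotopy.apply_one t

section Backward
variable {M : Type*} [TopologicalSpace M] {f : M → M} (hf : Continuous f) {k : ℕ} [NeZero k]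
  (x y : hoP f k) (α : (i : Fin k) → Path ((x.1 i) 0) ((y.1 i) 0))

def Apath (i : Fin k) : Path (x.1 i 1) (y.1 i 1) :=
  ((α (i+1)).map hf).cast (x.2 i).symm (y.2 i).symm

noncomputable def Ppath (i : Fin k) : Path (y.1 i 0) (y.1 i 1) :=
  ((α i).symm.trans (toPath (x.1 i))).trans (Apath hf x y α i)

noncomputable def bigF (i : Fin k) : C(I × I, M) :=
  ⟨fun st => (Ppath hf x y α i).truncate ((1 - st.1)/4) (1/2 + st.1/2) st.2, by
    have h1 : Continuous fun st : I × I =>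
        (((1 - (st.1:ℝ))/4, ((1/2 + (st.1:ℝ)/2 : ℝ), st.2)) : ℝ × ℝ × I) := by fun_prop
    exact ((Ppath hf x y α i).truncate_continuous_family).comp h1⟩

lemma bigF_apply (i : Fin k) (s t : I) :
    bigF hf x y α i (s, t) =
      (Ppath hf x y α i).extend (min (max (t:ℝ) ((1 - (s:ℝ))/4)) (1/2 + (s:ℝ)/2)) := rfl

lemma E0 (i : Fin k) (s : I) : bigF hf x y α i (s, 0) = α i s := by
  rw [bigF_apply]
  have hs0 : (0:ℝ) ≤ s := s.2.1
  have hs1 : (s:ℝ) ≤ 1 := s.2.2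
  have h1 : max ((0:I):ℝ) ((1 - (s:ℝ))/4) = (1 - (s:ℝ))/4 := by
    rw [max_eq_right]; norm_num; linarith
  have h2 : min ((1 - (s:ℝ))/4) (1/2 + (s:ℝ)/2) = (1 - (s:ℝ))/4 := by
    rw [min_eq_left]; linarith
  rw [h1, h2, Path.extend_apply _ (by constructor <;> [linarith; linarith])]
  rw [Ppath, Path.trans_apply]
  split_ifs with h
  · rw [Path.trans_apply]
    split_ifs with h'
    · show (α i) (σ _) = _
      congr 1
      apply Subtype.ext
      show 1 - (2 * (2 * ((1 - (s:ℝ))/4))) = (s:ℝ)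
      ring
    · exfalso; apply h'; show 2 * ((1 - (s:ℝ))/4) ≤ 1/2; linarith
  · exfalso; apply h; show (1 - (s:ℝ))/4 ≤ 1/2; linarith

lemma E1 (i : Fin k) (s : I) : bigF hf x y α i (s, 1) = f (α (i+1) s) := by
  rw [bigF_apply]
  have hs0 : (0:ℝ) ≤ s := s.2.1
  have hs1 : (s:ℝ) ≤ 1 := s.2.2
  have h1 : max ((1:I):ℝ) ((1 - (s:ℝ))/4) = 1 := by
    show max (1:ℝ) _ = 1
    rw [max_eq_left]; linarith
  have h2 : min (1:ℝ) (1/2 + (s:ℝ)/2) = 1/2 + (s:ℝ)/2 := by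
    rw [min_eq_right]; linarith
  rw [h1, h2, Path.extend_apply _ (by constructor <;> linarith)]
  rw [Ppath, Path.trans_apply]
  split_ifs with h
  · have hs : (s:ℝ) = 0 := by
      have : (1/2 + (s:ℝ)/2 : ℝ) ≤ 1/2 := h
      linarith
    rw [Path.trans_apply]
    split_ifs with h'
    · exfalso
      have : 2 * (1/2 + (s:ℝ)/2) ≤ 1/2 := h'
      linarith
    · show x.1 i _ = _
      have : f (α (i+1) s) = x.1 i 1 := by
        have hs' : s = 0 := Subtype.ext hs
        rw [hs', Path.source]
        exact x.2 i
      rw [this]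
      congr 1
      apply Subtype.ext
      show (2 * (2 * (1/2 + (s:ℝ)/2)) - 1 : ℝ) = 1
      rw [hs]; norm_num
  · show (Apath hf x y α i) _ = _
    show f ((α (i+1)) _) = _
    congr 1
    congr 1
    apply Subtype.ext
    show (2 * (1/2 + (s:ℝ)/2) - 1 : ℝ) = s
    ring

lemma mem_big (s : I) : (fun i => (bigF hf x y α i).curry s) ∈ hoP f k := by
  intro i
  show f (bigF hf x y α (i+1) (s, 0)) = bigF hf x y α i (s, 1)
  rw [E0, E1]

noncomputable def zPt (s : I) : hoP f k :=
  ⟨fun i => (bigF hf x y α i).curry s, mem_big hf x y α s⟩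

lemma joined_z : Joined (zPt hf x y α 0) (zPt hf x y α 1) :=
  ⟨⟨⟨fun s => zPt hf x y α s,
    Continuous.subtype_mk (continuous_pi fun i => ((bigF hf x y α i).curry).continuous) _⟩,
    rfl, rfl⟩⟩

lemma Ez1 (i : Fin k) (t : I) : bigF hf x y α i (1, t) = Ppath hf x y α i t := by
  rw [bigF_apply]
  have h1 : max (t:ℝ) ((1 - ((1:I):ℝ))/4) = (t:ℝ) := by
    show max (t:ℝ) ((1 - (1:ℝ))/4) = (t:ℝ)
    rw [max_eq_left]; norm_num; exact t.2.1
  have h2 : min ((t:ℝ)) (1/2 + ((1:I):ℝ)/2) = (t:ℝ) := by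
    show min (t:ℝ) (1/2 + (1:ℝ)/2) = (t:ℝ)
    rw [min_eq_left]; norm_num; exact t.2.2
  rw [h1, h2]
  exact (Ppath hf x y α i).extend_extends' t

lemma Ez0 (i : Fin k) (t u : I) (hu : (u:ℝ) = max 0 (min 1 (4*(t:ℝ)-1))) :
    bigF hf x y α i (0, t) = x.1 i u := by
  rw [bigF_apply]
  have h0t : (0:ℝ) ≤ t := t.2.1
  have h1t : (t:ℝ) ≤ 1 := t.2.2
  have hc1 : ((1 - ((0:I):ℝ))/4 : ℝ) = 1/4 := by norm_num
  have hc2 : (1/2 + ((0:I):ℝ)/2 : ℝ) = 1/2 := by norm_num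
  rw [hc1, hc2]
  have hw_mem : min (max (t:ℝ) (1/4)) (1/2) ∈ Set.Icc (0:ℝ) 1 := by
    constructor
    · exact le_min (le_max_of_le_right (by norm_num)) (by norm_num)
    · exact le_trans (min_le_right _ _) (by norm_num)
  have hw_ge : (1/4:ℝ) ≤ min (max (t:ℝ) (1/4)) (1/2) :=
    le_min (le_max_right _ _) (by norm_num)
  rw [Path.extend_apply _ hw_mem, Ppath, Path.trans_apply]
  split_ifs with hA
  · rw [Path.trans_apply]
    split_ifs with hB
    · -- t ≤ 1/4 region : value α i 0
      have hw : 2 * min (max (t:ℝ) (1/4)) (1/2) ≤ 1/2 := hB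
      have ht4 : (t:ℝ) ≤ 1/4 := by
        by_contra hcon
        push_neg at hcon
        have : (1/4:ℝ) < min (max (t:ℝ) (1/4)) (1/2) :=
          lt_min (lt_max_of_lt_left hcon) (by norm_num)
        linarith
      have hu0 : u = 0 := by
        apply Subtype.ext
        rw [hu, min_eq_right (by linarith : (4*(t:ℝ)-1) ≤ 1), max_eq_left (by linarith)]
        rfl
      rw [hu0]
      show (α i) (σ _) = _
      conv_rhs => rw [← (α i).source]
      congr 1
      apply Subtype.ext
      show 1 - 2 * (2 * min (max (t:ℝ) (1/4)) (1/2)) = ((0:I):ℝ)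
      rw [max_eq_right ht4, min_eq_left (by norm_num)]
      norm_num
    · -- t ≥ 1/4 region : value x i (4w - 1)
      show x.1 i _ = x.1 i u
      congr 1
      apply Subtype.ext
      push_neg at hB
      have hw : (1/4:ℝ) < min (max (t:ℝ) (1/4)) (1/2) := by
        have : (1/4:ℝ) ≤ min (max (t:ℝ) (1/4)) (1/2) := hw_ge
        rcases lt_or_eq_of_le this with h | h
        · exact h
        · exfalso
          have : 2 * min (max (t:ℝ) (1/4)) (1/2) ≤ 1/2 := by rw [← h]; norm_num
          exact absurd this (by exact_mod_cast not_le_of_gt (by exact_mod_cast hB))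
      have ht4 : (1/4:ℝ) < t := by
        by_contra hcon
        push_neg at hcon
        rw [max_eq_right hcon, min_eq_left (by norm_num)] at hw
        linarith
      rw [hu]
      show 2 * (2 * (min (max (t:ℝ) (1/4)) (1/2))) - 1 = max 0 (min 1 (4*(t:ℝ)-1))
      rw [max_eq_left (le_of_lt ht4)]
      rcases le_or_gt (t:ℝ) (1/2) with h12 | h12
      · rw [min_eq_left h12, min_eq_right (by linarith), max_eq_right (by linarith)]
        ring
      · rw [min_eq_right (le_of_lt h12), min_eq_left (by linarith),
          max_eq_right (by norm_num)]
        norm_num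
  · exfalso
    exact hA (min_le_right _ _)

lemma hPy (h : ∀ i : Fin k, Path.Homotopic
      ((toPath (x.1 i)).trans (Apath hf x y α i)) ((α i).trans (toPath (y.1 i))))
    (i : Fin k) : (Ppath hf x y α i).Homotopic (toPath (y.1 i)) := by
  have c1 : (Ppath hf x y α i).Homotopic
      ((α i).symm.trans ((toPath (x.1 i)).trans (Apath hf x y α i))) :=
    ⟨Path.Homotopy.transAssoc _ _ _⟩
  have c2 := (Path.Homotopic.refl (α i).symm).hcomp (h i)
  have c3 : ((α i).symm.trans ((α i).trans (toPath (y.1 i)))).Homotopic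
      (((α i).symm.trans (α i)).trans (toPath (y.1 i))) :=
    (Path.Homotopic.symm ⟨Path.Homotopy.transAssoc _ _ _⟩)
  have c4 : ((α i).symm.trans (α i)).Homotopic (Path.refl ((y.1 i) 0)) :=
    (Path.Homotopic.symm ⟨Path.Homotopy.reflSymmTrans (α i)⟩)
  have c5 := c4.hcomp (Path.Homotopic.refl (toPath (y.1 i)))
  have c6 : ((Path.refl ((y.1 i) 0)).trans (toPath (y.1 i))).Homotopic (toPath (y.1 i)) :=
    ⟨Path.Homotopy.reflTrans _⟩
  exact (((c1.trans c2).trans c3).trans c5).trans c6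

end Backward

/-- Two points `λ, γ` of `hoP_k(f)` lie in the same path component of `hoP_k(f)`
iff there are paths `α_i` from `λ_i(0)` to `γ_i(0)` such that each concatenation
`λ_i · (f ∘ α_{i+1})` is path-homotopic rel endpoints to `α_i · γ_i`. -/
theorem hoP_joined_iff {M : Type*} [TopologicalSpace M] (f : M → M)
    (hf : Continuous f) (k : ℕ) [NeZero k] (x y : hoP f k) :
    Joined x y ↔
      ∃ α : (i : Fin k) → Path ((x.1 i) 0) ((y.1 i) 0),
        ∀ i : Fin k,
          Path.Homotopic
            ((toPath (x.1 i)).trans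
              (((α (i + 1)).map hf).cast (x.2 i).symm (y.2 i).symm))
            ((α i).trans (toPath (y.1 i))) := by
  constructor
  · rintro ⟨H⟩
    have hH : Continuous fun s : I => (H s : Fin k → C(I, M)) :=
      continuous_subtype_val.comp H.continuous
    have hHi : ∀ i : Fin k, Continuous fun s : I => (H s : Fin k → C(I, M)) i :=
      fun i => (continuous_apply i).comp hH
    have hFi : ∀ i : Fin k, Continuous fun st : I × I => ((H st.1 : Fin k → C(I, M)) i) st.2 :=
      fun i => ContinuousEval.continuous_eval.comp (((hHi i).comp continuous_fst).prodMk
        continuous_snd)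
    refine ⟨fun i => ⟨⟨fun s => ((H s : Fin k → C(I, M)) i) 0, ?_⟩, ?_, ?_⟩, ?_⟩
    · exact ContinuousEvalConst.continuous_eval_const 0 |>.comp (hHi _)
    · show ((H 0 : Fin k → C(I, M)) i) 0 = _
      rw [H.source]
    · show ((H 1 : Fin k → C(I, M)) i) 0 = _
      rw [H.target]
    intro i
    have hd : (((Path.refl (0:I)).prod idP).trans (idP.prod (Path.refl (1:I)))).Homotopic
        ((idP.prod (Path.refl (0:I))).trans ((Path.refl (1:I)).prod idP)) :=
      SimplyConnectedSpace.paths_homotopic _ _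
    have hm := hd.map (⟨_, hFi i⟩ : C(I × I, M))
    rw [Path.map_trans, Path.map_trans] at hm
    refine homotopic_of_eqOn _ _ _ _ ?_ ?_ hm
    · intro t
      rw [Path.trans_apply, Path.trans_apply]
      split_ifs with h
      · show (x.1 i) _ = ((H _ : Fin k → C(I, M)) i) _
        rw [show (⟨0, unitInterval.zero_mem⟩ : I) = (0:I) from rfl, H.source]
      · show f _ = ((H _ : Fin k → C(I, M)) i) _
        exact ((H _).2 i)
    · intro t
      rw [Path.trans_apply, Path.trans_apply]
      split_ifs with h
      · rfl
      · show (y.1 i) _ = ((H _ : Fin k → C(I, M)) i) _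
        rw [show (⟨1, unitInterval.one_mem⟩ : I) = (1:I) from rfl, H.target]
  · rintro ⟨α, h⟩
    have hA : ∀ i : Fin k, Path.Homotopic
        ((toPath (x.1 i)).trans (Apath hf x y α i)) ((α i).trans (toPath (y.1 i))) := h
    have hxz : Joined x (zPt hf x y α 0) := by
      have h0 : ∀ i, x.1 i 0 = (zPt hf x y α 0).1 i 0 := by
        intro i
        show x.1 i 0 = bigF hf x y α i (0, 0)
        rw [E0]; exact (α i).source.symm
      have h1 : ∀ i, x.1 i 1 = (zPt hf x y α 0).1 i 1 := by
        intro i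
        show x.1 i 1 = bigF hf x y α i (0, 1)
        rw [E1, (α (i+1)).source]; exact (x.2 i).symm
      refine joined_of_htpy _ _ h0 h1 ?_
      intro i
      have hmem : ∀ t : I, max 0 (min 1 (4*(t:ℝ)-1)) ∈ Set.Icc (0:ℝ) 1 :=
        fun t => ⟨le_max_left _ _, max_le (by norm_num) (min_le_left _ _)⟩
      set φ : I → I := fun t => ⟨max 0 (min 1 (4*(t:ℝ)-1)), hmem t⟩ with hφdef
      have hφ : Continuous φ := by
        apply Continuous.subtype_mk
        fun_prop
      have φ0 : φ 0 = 0 := by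
        apply Subtype.ext; show max 0 (min 1 (4*((0:I):ℝ)-1)) = 0; norm_num
      have φ1 : φ 1 = 1 := by
        apply Subtype.ext; show max 0 (min 1 (4*((1:I):ℝ)-1)) = 1; norm_num
      refine homotopic_of_eqOn _ _ (toPath (x.1 i))
        ((toPath (x.1 i)).reparam φ hφ φ0 φ1) (fun t => rfl) ?_
        ⟨Path.Homotopy.reparam _ φ hφ φ0 φ1⟩
      intro t
      show bigF hf x y α i (0, t) = x.1 i (φ t)
      exact Ez0 hf x y α i t (φ t) rfl
    have hyz : Joined y (zPt hf x y α 1) := by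
      have h0 : ∀ i, y.1 i 0 = (zPt hf x y α 1).1 i 0 := by
        intro i
        show y.1 i 0 = bigF hf x y α i (1, 0)
        rw [E0]; exact (α i).target.symm
      have h1 : ∀ i, y.1 i 1 = (zPt hf x y α 1).1 i 1 := by
        intro i
        show y.1 i 1 = bigF hf x y α i (1, 1)
        rw [E1, (α (i+1)).target]; exact (y.2 i).symm
      refine joined_of_htpy _ _ h0 h1 ?_
      intro i
      refine homotopic_of_eqOn _ _ (toPath (y.1 i)) (Ppath hf x y α i) (fun t => rfl) ?_
        ((hPy hf x y α hA i).symm)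
      intro t
      show bigF hf x y α i (1, t) = Ppath hf x y α i t
      exact Ez1 hf x y α i t
    exact (hxz.trans (joined_z hf x y α)).trans hyz.symm
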